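/- Let A ∈ ℝ^{m×n} with m ≥ n and rank A = n, b ∈ ℝ^m, and w ∈ (0,∞)^m. Set v := w^{−1} (entrywise reciprocals) and c := diag(v) b. Then the optimal values of the weighted least-squares and weighted least-norm problems satisfy the duality relation min_{x ∈ ℝ^n} ‖Ax − b‖²_v = ‖b‖²_v − min_{z ∈ ℝ^m, Aᵀz = 0} ‖c − z‖²_w. -/

import Mathlib

open Matrix

set_option maxHeartbeats 1000000 in
/-- Duality between weighted least squares and weighted least norm: with `v = w⁻¹`
(entrywise) and `c = diag(v) b`, the optimal values satisfy
`min_x ‖Ax - b‖²_v = ‖b‖²_v - min { ‖c - z‖²_w : Aᵀ z = 0 }`;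
in particular both minima are attained. -/
theorem least_squares_least_norm_duality (m n : ℕ) (hmn : n ≤ m)
    (A : Matrix (Fin m) (Fin n) ℝ) (hA : A.rank = n)
    (b : Fin m → ℝ) (w : Fin m → ℝ) (hw : ∀ i, 0 < w i) :
    ∃ m₁ m₂ : ℝ,
      IsLeast {y : ℝ | ∃ x : Fin n → ℝ, y = ∑ i, (w i)⁻¹ * (A.mulVec x i - b i) ^ 2} m₁ ∧
      IsLeast {y : ℝ | ∃ z : Fin m → ℝ, Aᵀ.mulVec z = 0 ∧
          y = ∑ i, w i * ((w i)⁻¹ * b i - z i) ^ 2} m₂ ∧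
      m₁ = (∑ i, (w i)⁻¹ * b i ^ 2) - m₂ := by
  classical
  set s : Fin m → ℝ := fun i => (Real.sqrt (w i))⁻¹ with hs
  have hsqw : ∀ i, 0 < Real.sqrt (w i) := fun i => Real.sqrt_pos.2 (hw i)
  have hs1 : ∀ i, s i * Real.sqrt (w i) = 1 := fun i => inv_mul_cancel₀ (hsqw i).ne'
  have hgen : ∀ i, ∃ r : ℝ, r ≠ 0 ∧ w i = r * r ∧ s i = r⁻¹ ∧ Real.sqrt (w i) = r :=
    fun i => ⟨Real.sqrt (w i), (hsqw i).ne', (Real.mul_self_sqrt (hw i).le).symm, rfl, rfl⟩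
  set B : Matrix (Fin m) (Fin n) ℝ := Matrix.of fun i j => s i * A i j with hB
  have hBmul : ∀ (x : Fin n → ℝ) i, B.mulVec x i = s i * A.mulVec x i := by
    intro x i
    simp [hB, Matrix.mulVec, dotProduct, Finset.mul_sum, mul_assoc]
  set toE : (Fin m → ℝ) →ₗ[ℝ] EuclideanSpace ℝ (Fin m) :=
    (WithLp.linearEquiv 2 ℝ (Fin m → ℝ)).symm.toLinearMap with htoE
  have htoE_apply : ∀ (x : Fin m → ℝ) i, toE x i = x i := fun x i => rfl
  set K : Submodule ℝ (EuclideanSpace ℝ (Fin m)) :=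
    LinearMap.range (toE ∘ₗ B.mulVecLin) with hK
  set b' : EuclideanSpace ℝ (Fin m) := toE (fun i => s i * b i) with hb'
  have hnormE : ∀ x : EuclideanSpace ℝ (Fin m), ‖x‖ ^ 2 = ∑ i, x i ^ 2 := by
    intro x
    rw [EuclideanSpace.norm_eq, Real.sq_sqrt (by positivity)]
    simp [sq_abs]
  have hinner : ∀ x y : EuclideanSpace ℝ (Fin m), (inner ℝ x y : ℝ) = ∑ i, x i * y i := by
    intro x y
    simp [PiLp.inner_apply, RCLike.inner_apply, conj_trivial, mul_comm]
  set p : EuclideanSpace ℝ (Fin m) := (Submodule.orthogonalProjection K b' : EuclideanSpace ℝ (Fin m))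
    with hp
  have hpK : p ∈ K := (Submodule.orthogonalProjection K b').2
  have hqK : b' - p ∈ Kᗮ := Submodule.sub_starProjection_mem_orthogonal b'
  refine ⟨‖b' - p‖ ^ 2, ‖p‖ ^ 2, ⟨?_, ?_⟩, ⟨?_, ?_⟩, ?_⟩
  · -- m₁ ∈ set1
    obtain ⟨x₀, hx₀⟩ := hpK
    refine ⟨x₀, ?_⟩
    rw [hnormE]
    refine Finset.sum_congr rfl fun i _ => ?_
    have hbp : (b' - p) i = s i * b i - s i * A.mulVec x₀ i := by
      rw [← hx₀]
      simp [hb', htoE_apply, hBmul]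
    obtain ⟨r, hr0, hrw, hsr, -⟩ := hgen i
    rw [hbp, hsr, hrw]
    field_simp
    try ring
    try tauto
  · -- lower bound set1
    rintro y ⟨x, rfl⟩
    set k : EuclideanSpace ℝ (Fin m) := toE (B.mulVec x) with hk
    have hkK : k ∈ K := ⟨x, rfl⟩
    have hval : ∑ i, (w i)⁻¹ * (A.mulVec x i - b i) ^ 2 = ‖k - b'‖ ^ 2 := by
      rw [hnormE]
      refine Finset.sum_congr rfl fun i _ => ?_
      have hki : (k - b') i = s i * A.mulVec x i - s i * b i := by
        simp [hk, hb', htoE_apply, hBmul]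
      obtain ⟨r, hr0, hrw, hsr, -⟩ := hgen i
      rw [hki, hsr, hrw]
      field_simp
      try ring
      try exact Or.inl trivial
    rw [hval]
    have hdecomp : k - b' = (k - p) + (p - b') := by abel
    have hiz : (inner ℝ (k - p) (p - b') : ℝ) = 0 := by
      have h1 : k - p ∈ K := K.sub_mem hkK hpK
      have h2 : p - b' ∈ Kᗮ := by
        have := Kᗮ.neg_mem hqK
        simpa [neg_sub] using this
      exact Submodule.inner_right_of_mem_orthogonal h1 h2
    rw [hdecomp, norm_add_sq_real, hiz]
    have : ‖p - b'‖ = ‖b' - p‖ := norm_sub_rev _ _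
    rw [this]
    nlinarith [sq_nonneg ‖k - p‖]
  · -- m₂ ∈ set2
    refine ⟨fun i => s i * (b' - p) i, ?_, ?_⟩
    · funext j
      have hcol : toE (B.mulVec (Pi.single j 1)) ∈ K := ⟨Pi.single j 1, rfl⟩
      have h0 : (inner ℝ (toE (B.mulVec (Pi.single j 1))) (b' - p) : ℝ) = 0 :=
        Submodule.inner_right_of_mem_orthogonal hcol hqK
      rw [hinner] at h0
      have hBv : ∀ i, toE (B.mulVec (Pi.single j 1)) i = s i * A i j := by
        intro i
        rw [htoE_apply, hBmul]
        congr 1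
        simp [Matrix.mulVec_single]
      calc Aᵀ.mulVec (fun i => s i * (b' - p) i) j
          = ∑ i, A i j * (s i * (b' - p) i) := by
            simp [Matrix.mulVec, dotProduct, Matrix.transpose_apply]
        _ = ∑ i, toE (B.mulVec (Pi.single j 1)) i * (b' - p) i := by
            refine Finset.sum_congr rfl fun i _ => ?_
            rw [hBv i]; ring
        _ = 0 := h0
    · rw [hnormE]
      refine Finset.sum_congr rfl fun i _ => ?_
      beta_reduce
      have hbp : (b' - p) i = s i * b i - p i := by simp [hb', htoE_apply]
      obtain ⟨r, hr0, hrw, hsr, -⟩ := hgen i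
      rw [hbp, hsr, hrw]
      field_simp
      try ring
      try exact Or.inl trivial
  · -- lower bound set2
    rintro y ⟨z, hz, rfl⟩
    set u : EuclideanSpace ℝ (Fin m) := toE (fun i => Real.sqrt (w i) * z i) with hu
    have huK : u ∈ Kᗮ := by
      intro k hk
      obtain ⟨x, rfl⟩ := hk
      rw [hinner]
      simp only [LinearMap.comp_apply]
      have hterm : ∀ i, toE (B.mulVecLin x) i * u i = A.mulVec x i * z i := by
        intro i
        have h1 : toE (B.mulVecLin x) i = s i * A.mulVec x i := by
          rw [htoE_apply]; exact hBmul x i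
        have h2 : u i = Real.sqrt (w i) * z i := rfl
        rw [h1, h2]
        have h3 : s i * A.mulVec x i * (Real.sqrt (w i) * z i)
            = (s i * Real.sqrt (w i)) * (A.mulVec x i * z i) := by ring
        rw [h3, hs1, one_mul]
      rw [Finset.sum_congr rfl fun i _ => hterm i]
      have hsw : ∑ i, A.mulVec x i * z i = ∑ j, x j * Aᵀ.mulVec z j := by
        simp only [Matrix.mulVec, dotProduct, Matrix.transpose_apply,
          Finset.sum_mul, Finset.mul_sum]
        rw [Finset.sum_comm]
        exact Finset.sum_congr rfl fun i _ => Finset.sum_congr rfl fun j _ => by ring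
      rw [hsw, hz]
      simp
    have hval : ∑ i, w i * ((w i)⁻¹ * b i - z i) ^ 2 = ‖b' - u‖ ^ 2 := by
      rw [hnormE]
      refine Finset.sum_congr rfl fun i _ => ?_
      have hbu : (b' - u) i = s i * b i - Real.sqrt (w i) * z i := by
        simp [hb', hu, htoE_apply]
      obtain ⟨r, hr0, hrw, hsr, hsq⟩ := hgen i
      rw [hbu, hsr, hsq, hrw]
      field_simp
      try ring
      try exact Or.inl trivial
    rw [hval]
    have hdecomp : b' - u = p + ((b' - p) - u) := by abel
    have hiz : (inner ℝ p ((b' - p) - u) : ℝ) = 0 :=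
      Submodule.inner_right_of_mem_orthogonal hpK (Kᗮ.sub_mem hqK huK)
    rw [hdecomp, norm_add_sq_real, hiz]
    nlinarith [sq_nonneg ‖(b' - p) - u‖]
  · -- duality relation
    have hpyth : ‖b'‖ ^ 2 = ‖p‖ ^ 2 + ‖b' - p‖ ^ 2 := by
      have hdecomp : b' = p + (b' - p) := by abel
      have hiz : (inner ℝ p (b' - p) : ℝ) = 0 :=
        Submodule.inner_right_of_mem_orthogonal hpK hqK
      conv_lhs => rw [hdecomp]
      rw [norm_add_sq_real, hiz]
      ring
    have hb'norm : ‖b'‖ ^ 2 = ∑ i, (w i)⁻¹ * b i ^ 2 := by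
      rw [hnormE]
      refine Finset.sum_congr rfl fun i _ => ?_
      have hbi : b' i = s i * b i := rfl
      obtain ⟨r, hr0, hrw, hsr, -⟩ := hgen i
      rw [hbi, hsr, hrw]
      field_simp
      try ring
      try exact Or.inl trivial
    linarith [hb'norm, hpyth]
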